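/- Differences of perfect matchings are killed by the symmetrized matrices: let E be a finite set, σ₀, σ₁ permutations of E, m a perfect matching, and ρ_{m,c} = (I − ς_{m,c})^{-1} for c = 0,1 the associated matrices. Then for any two perfect matchings m₃ and m₄, viewed as column vectors in ℤ^E, one has (ρ_{m,0} + ρ_{m,0}ᵀ − I)(m₃ − m₄) = 0 and (ρ_{m,1} + ρ_{m,1}ᵀ − I)(m₃ − m₄) = 0. -/

import Mathlib

open Finset Matrix

variable {E : Type*}

/-- A perfect matching of `(E, σ₀, σ₁)`: a `{0,1}`-valued function on `E` such that every
cycle (orbit) of `σ₀` and every cycle of `σ₁` contains exactly one element with value `1`. -/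
def IsPerfectMatching (σ₀ σ₁ : Equiv.Perm E) (m : E → ℤ) : Prop :=
  (∀ e, m e = 0 ∨ m e = 1) ∧
  (∀ e, ∃! e', σ₀.SameCycle e e' ∧ m e' = 1) ∧
  (∀ e, ∃! e', σ₁.SameCycle e e' ∧ m e' = 1)

/-- The "broken" permutation matrix `ς_{m,σ}`: the matrix of the permutation `σ`
(with `(σ e, e)`-entry `1`) in which every column `e` with `m e = 1` is replaced by zero. -/
def brokenPermMatrix [DecidableEq E] (σ : Equiv.Perm E) (m : E → ℤ) : Matrix E E ℤ :=
  Matrix.of fun e' e => if e' = σ e ∧ m e = 0 then 1 else 0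

/-- The matrix `ρ_{m,σ} = (I - ς_{m,σ})⁻¹`. -/
noncomputable def rhoMatrix [Fintype E] [DecidableEq E] (σ : Equiv.Perm E) (m : E → ℤ) :
    Matrix E E ℤ :=
  (1 - brokenPermMatrix σ m)⁻¹

lemma broken_pow_apply [Fintype E] [DecidableEq E] (σ : Equiv.Perm E) (m : E → ℤ)
    (k : ℕ) (e' e : E) :
    (brokenPermMatrix σ m ^ k) e' e
      = if e' = (σ ^ k) e ∧ ∀ j < k, m ((σ ^ j) e) = 0 then 1 else 0 := by
  induction k generalizing e with
  | zero => simp [Matrix.one_apply]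
  | succ k ih =>
    rw [pow_succ, Matrix.mul_apply]
    have hsum : ∀ x, (brokenPermMatrix σ m ^ k) e' x * brokenPermMatrix σ m x e
        = if x = σ e then (if m e = 0 then (brokenPermMatrix σ m ^ k) e' (σ e) else 0) else 0 := by
      intro x
      by_cases h1 : x = σ e <;> by_cases h2 : m e = 0 <;>
        simp [brokenPermMatrix, h1, h2]
    rw [Finset.sum_congr rfl fun x _ => hsum x, Finset.sum_ite_eq' Finset.univ (σ e),
      if_pos (Finset.mem_univ _)]
    by_cases h2 : m e = 0
    · rw [if_pos h2, ih (σ e)]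
      apply if_congr _ rfl rfl
      constructor
      · rintro ⟨h, hall⟩
        refine ⟨by rw [h, pow_succ, Equiv.Perm.mul_apply], ?_⟩
        intro j hj
        rcases Nat.eq_zero_or_pos j with rfl | hp
        · simpa using h2
        · have := hall (j - 1) (by omega)
          rw [← Equiv.Perm.mul_apply, ← pow_succ] at this
          have hj' : j - 1 + 1 = j := by omega
          rwa [hj'] at this
      · rintro ⟨h, hall⟩
        refine ⟨by rw [h, pow_succ, Equiv.Perm.mul_apply], ?_⟩
        intro j hj
        have := hall (j + 1) (by omega)
        rwa [pow_succ, Equiv.Perm.mul_apply] at this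
    · rw [if_neg h2, if_neg]
      rintro ⟨-, hall⟩
      exact h2 (by simpa using hall 0 (by omega))

lemma aux_kill [Fintype E] [DecidableEq E] (σ : Equiv.Perm E) (m m₃ m₄ : E → ℤ)
    (h0 : ∀ e, m e = 0 ∨ m e = 1)
    (h1 : ∀ e, ∃! e', σ.SameCycle e e' ∧ m e' = 1)
    (h30 : ∀ e, m₃ e = 0 ∨ m₃ e = 1)
    (h31 : ∀ e, ∃! e', σ.SameCycle e e' ∧ m₃ e' = 1)
    (h40 : ∀ e, m₄ e = 0 ∨ m₄ e = 1)
    (h41 : ∀ e, ∃! e', σ.SameCycle e e' ∧ m₄ e' = 1) :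
    (rhoMatrix σ m + (rhoMatrix σ m)ᵀ - 1).mulVec (m₃ - m₄) = 0 := by
  classical
  -- the first time (going forward) the matching `m` is hit
  have hK : ∀ e : E, ∃ k : ℕ, m ((σ ^ k) e) = 1 := by
    intro e
    obtain ⟨e', ⟨hc, hm1⟩, -⟩ := h1 e
    obtain ⟨i, -, hi⟩ := hc.exists_pow_eq'
    exact ⟨i, hi ▸ hm1⟩
  set K : E → ℕ := fun e => Nat.find (hK e) with hKdef
  have hK1 : ∀ e, m ((σ ^ K e) e) = 1 := fun e => Nat.find_spec (hK e)
  have hKmin : ∀ e, ∀ j < K e, m ((σ ^ j) e) = 0 := by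
    intro e j hj
    rcases h0 ((σ ^ j) e) with h | h
    · exact h
    · exact absurd h (Nat.find_min (hK e) hj)
  -- injectivity on the initial segment
  have hinj : ∀ e, ∀ i j, i ≤ K e → j ≤ K e → (σ ^ i) e = (σ ^ j) e → i = j := by
    have key : ∀ e, ∀ i j, i < j → j ≤ K e → (σ ^ i) e ≠ (σ ^ j) e := by
      intro e i j hlt hle heq
      set d := j - i with hd
      set t := K e - d with ht
      have h1' : (σ ^ (t + d)) e = (σ ^ t) e := by
        have e1 : t + d = (t - i) + j := by omega
        have e2 : t - i + i = t := by omega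
        rw [e1, pow_add, Equiv.Perm.mul_apply, ← heq, ← Equiv.Perm.mul_apply, ← pow_add, e2]
      have e3 : t + d = K e := by omega
      rw [e3] at h1'
      have : m ((σ ^ t) e) = 1 := by rw [← h1']; exact hK1 e
      have ht' : t < K e := by omega
      rw [hKmin e t ht'] at this
      exact absurd this (by norm_num)
    intro e i j hi hj heq
    rcases lt_trichotomy i j with h | h | h
    · exact absurd heq (key e i j h hj)
    · exact h
    · exact absurd heq.symm (key e j i h hi)
  -- cycle sums of perfect matchings are 1
  have hsum1 : ∀ (m' : E → ℤ), (∀ e, m' e = 0 ∨ m' e = 1) →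
      (∀ e, ∃! e', σ.SameCycle e e' ∧ m' e' = 1) →
      ∀ (e : E) (p : ℕ), 0 < p → (σ ^ p) e = e →
      (∀ i j, i < p → j < p → (σ ^ i) e = (σ ^ j) e → i = j) →
      ∑ k ∈ Finset.range p, m' ((σ ^ k) e) = 1 := by
    intro m' h0' h1' e p hp hpe hinj'
    have hper : ∀ i : ℕ, (σ ^ (p * i)) e = e := by
      intro i
      induction i with
      | zero => simp
      | succ i ih =>
        rw [Nat.mul_succ, pow_add, Equiv.Perm.mul_apply, hpe, ih]
    have hmod : ∀ i : ℕ, (σ ^ i) e = (σ ^ (i % p)) e := by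
      intro i
      conv_lhs => rw [← Nat.mod_add_div i p]
      rw [pow_add, Equiv.Perm.mul_apply, hper]
    obtain ⟨e₀, ⟨hc, he₀⟩, huniq⟩ := h1' e
    obtain ⟨i, -, hi⟩ := hc.exists_pow_eq'
    have hiltp : i % p < p := Nat.mod_lt _ hp
    have he₀eq : (σ ^ (i % p)) e = e₀ := by rw [← hmod, hi]
    rw [Finset.sum_eq_single_of_mem (i % p) (Finset.mem_range.mpr hiltp)]
    · rw [he₀eq, he₀]
    · intro b hb hne
      have hsc : σ.SameCycle e ((σ ^ b) e) := ⟨(b : ℤ), by simp⟩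
      rcases h0' ((σ ^ b) e) with h | h
      · exact h
      · exact absurd (hinj' b (i % p) (Finset.mem_range.mp hb) hiltp
          (by rw [he₀eq, huniq _ ⟨hsc, h⟩])) hne
  -- the vector w
  set v : E → ℤ := m₃ - m₄ with hv
  have hvapp : ∀ e, v e = m₃ e - m₄ e := fun e => rfl
  set w : E → ℤ := fun e => ∑ k ∈ Finset.range (K e + 1), v ((σ ^ k) e) with hw
  have hF1 : ∀ e, m e = 1 → w e = v e := by
    intro e he
    have h0e : K e = 0 := by
      have := Nat.find_eq_zero (hK e)
      rw [hKdef]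
      exact this.mpr (by simpa using he)
    simp [hw, h0e]
  have hF2 : ∀ e, m e = 0 → w e = v e + w (σ e) := by
    intro e he
    have hK0 : K e ≠ 0 := by
      intro h
      have := hK1 e
      rw [h] at this
      simp [he] at this
    have hKσ : K (σ e) = K e - 1 := by
      apply le_antisymm
      · apply Nat.find_le
        show m ((σ ^ (K e - 1)) (σ e)) = 1
        rw [← Equiv.Perm.mul_apply, ← pow_succ]
        have h' : K e - 1 + 1 = K e := by omega
        rw [h']
        exact hK1 e
      · by_contra hcon
        push_neg at hcon
        have hval := hK1 (σ e)
        rw [← Equiv.Perm.mul_apply, ← pow_succ] at hval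
        rw [hKmin e (K (σ e) + 1) (by omega)] at hval
        exact absurd hval (by norm_num)
    have hsplit : w e = (∑ k ∈ Finset.range (K e), v ((σ ^ (k + 1)) e)) + v ((σ ^ 0) e) := by
      rw [hw]; exact Finset.sum_range_succ' _ _
    rw [hsplit]
    simp only [pow_zero, Equiv.Perm.coe_one, id_eq]
    rw [add_comm]
    congr 1
    have hKe : K e = K (σ e) + 1 := by omega
    rw [hw, hKe]
    apply Finset.sum_congr rfl
    intro k _
    rw [pow_succ, Equiv.Perm.mul_apply]
  have hF3 : ∀ e, m (σ⁻¹ e) = 1 → w e = 0 := by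
    intro e he
    have ha : (σ ^ K e) e = σ⁻¹ e := by
      obtain ⟨e₀, -, huniq⟩ := h1 e
      have hA := huniq ((σ ^ K e) e) ⟨⟨(K e : ℤ), by simp⟩, hK1 e⟩
      have hB := huniq (σ⁻¹ e) ⟨⟨(-1 : ℤ), by simp⟩, he⟩
      rw [hA, hB]
    have hpe : (σ ^ (K e + 1)) e = e := by
      rw [pow_succ', Equiv.Perm.mul_apply, ha, (by exact Equiv.apply_symm_apply σ e : σ (σ⁻¹ e) = e)]
    have hinj' : ∀ i j, i < K e + 1 → j < K e + 1 → (σ ^ i) e = (σ ^ j) e → i = j :=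
      fun i j hi hj => hinj e i j (by omega) (by omega)
    rw [hw]
    simp only [hvapp, Finset.sum_sub_distrib]
    rw [hsum1 m₃ h30 h31 e (K e + 1) (by omega) hpe hinj',
      hsum1 m₄ h40 h41 e (K e + 1) (by omega) hpe hinj', sub_self]
  -- nilpotency and invertibility
  have hcard : ∀ e, K e < Fintype.card E := by
    intro e
    have hle : (Finset.range (K e + 1)).card ≤ (Finset.univ : Finset E).card := by
      apply Finset.card_le_card_of_injOn (fun k => (σ ^ k) e) (fun _ _ => Finset.mem_univ _)
      intro i hi j hj hij
      simp only [Finset.mem_coe, Finset.mem_range] at hi hj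
      exact hinj e i j (by omega) (by omega) hij
    simp only [Finset.card_range, Finset.card_univ] at hle
    omega
  have hnil : brokenPermMatrix σ m ^ Fintype.card E = 0 := by
    ext e' e
    rw [broken_pow_apply, Matrix.zero_apply, if_neg]
    rintro ⟨-, hall⟩
    have := hall (K e) (hcard e)
    rw [hK1 e] at this
    exact absurd this (by norm_num)
  have hunit : IsUnit (1 - brokenPermMatrix σ m) :=
    IsNilpotent.isUnit_one_sub ⟨Fintype.card E, hnil⟩
  set A : Matrix E E ℤ := 1 - brokenPermMatrix σ m with hA
  have hdet : IsUnit A.det := (Matrix.isUnit_iff_isUnit_det A).mp hunit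
  have hdetT : IsUnit Aᵀ.det := by rwa [Matrix.det_transpose]
  set u : E → ℤ := v - w with hu
  -- A u = v
  have hAu : A.mulVec u = v := by
    funext e
    rw [Matrix.mulVec, dotProduct]
    have hterm : ∀ x, A e x * u x
        = (if e = x then u x else 0) - (if x = σ⁻¹ e ∧ m (σ⁻¹ e) = 0 then u x else 0) := by
      intro x
      have hcond : (e = σ x ∧ m x = 0) ↔ (x = σ⁻¹ e ∧ m (σ⁻¹ e) = 0) := by
        constructor
        · rintro ⟨h, h'⟩
          have : x = σ⁻¹ e := by rw [h, (by exact Equiv.symm_apply_apply σ x : σ⁻¹ (σ x) = x)]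
          exact ⟨this, this ▸ h'⟩
        · rintro ⟨h, h'⟩
          refine ⟨by rw [h, (by exact Equiv.apply_symm_apply σ e : σ (σ⁻¹ e) = e)], h ▸ h'⟩
      rw [hA]
      simp only [Matrix.sub_apply, Matrix.one_apply, brokenPermMatrix, Matrix.of_apply]
      rw [if_congr hcond rfl rfl, sub_mul]
      congr 1 <;> [skip; skip] <;> split <;> simp
    rw [Finset.sum_congr rfl fun x _ => hterm x, Finset.sum_sub_distrib,
      Finset.sum_ite_eq Finset.univ e, if_pos (Finset.mem_univ _)]
    by_cases hme : m (σ⁻¹ e) = 0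
    · rw [Finset.sum_eq_single_of_mem (σ⁻¹ e) (Finset.mem_univ _)
        (by intro b _ hb; rw [if_neg]; rintro ⟨h, -⟩; exact hb h), if_pos ⟨rfl, hme⟩]
      have hrec := hF2 (σ⁻¹ e) hme
      rw [(by exact Equiv.apply_symm_apply σ e : σ (σ⁻¹ e) = e)] at hrec
      simp only [hu, Pi.sub_apply]
      rw [hrec]
      ring
    · rw [Finset.sum_eq_zero (by intro b _; rw [if_neg]; rintro ⟨-, h⟩; exact hme h)]
      have h1' : m (σ⁻¹ e) = 1 := (h0 (σ⁻¹ e)).resolve_left hme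
      have hw0 := hF3 e h1'
      simp only [hu, Pi.sub_apply, hw0]
      ring
  -- Aᵀ w = v
  have hAtw : Aᵀ.mulVec w = v := by
    funext e
    rw [Matrix.mulVec, dotProduct]
    have hterm : ∀ x, Aᵀ e x * w x
        = (if x = e then w x else 0) - (if x = σ e ∧ m e = 0 then w x else 0) := by
      intro x
      rw [hA]
      simp only [Matrix.transpose_apply, Matrix.sub_apply, Matrix.one_apply, brokenPermMatrix,
        Matrix.of_apply]
      by_cases hx : x = e <;> by_cases hc : x = σ e ∧ m e = 0 <;>
        simp [hx, hc, eq_comm, sub_mul]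
    rw [Finset.sum_congr rfl fun x _ => hterm x, Finset.sum_sub_distrib,
      Finset.sum_ite_eq' Finset.univ e, if_pos (Finset.mem_univ _)]
    by_cases hme : m e = 0
    · rw [Finset.sum_eq_single_of_mem (σ e) (Finset.mem_univ _)
        (by intro b _ hb; rw [if_neg]; rintro ⟨h, -⟩; exact hb h), if_pos ⟨rfl, hme⟩]
      rw [hF2 e hme]
      ring
    · rw [Finset.sum_eq_zero (by intro b _; rw [if_neg]; rintro ⟨-, h⟩; exact hme h)]
      have h1' : m e = 1 := (h0 e).resolve_left hme
      rw [hF1 e h1']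
      ring
  -- conclude
  have hinvu : A⁻¹.mulVec v = u := by
    rw [← hAu, Matrix.mulVec_mulVec, Matrix.nonsing_inv_mul A hdet, Matrix.one_mulVec]
  have hinvw : (A⁻¹)ᵀ.mulVec v = w := by
    rw [Matrix.transpose_nonsing_inv, ← hAtw, Matrix.mulVec_mulVec,
      Matrix.nonsing_inv_mul Aᵀ hdetT, Matrix.one_mulVec]
  have hrho : rhoMatrix σ m = A⁻¹ := rfl
  rw [hrho, Matrix.sub_mulVec, Matrix.add_mulVec, hinvu, hinvw, Matrix.one_mulVec]
  funext e
  simp [hu]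

/-- The differences of perfect matchings, viewed as column vectors, are killed by the
symmetrized matrices `ρ_{m,c} + ρ_{m,c}ᵀ - I` for `c = 0, 1`. -/
theorem symmetrized_rho_mulVec_matching_difference [Fintype E] [DecidableEq E]
    (σ₀ σ₁ : Equiv.Perm E) (m m₃ m₄ : E → ℤ)
    (hm : IsPerfectMatching σ₀ σ₁ m)
    (hm₃ : IsPerfectMatching σ₀ σ₁ m₃)
    (hm₄ : IsPerfectMatching σ₀ σ₁ m₄) :
    (rhoMatrix σ₀ m + (rhoMatrix σ₀ m)ᵀ - 1).mulVec (m₃ - m₄) = 0 ∧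
    (rhoMatrix σ₁ m + (rhoMatrix σ₁ m)ᵀ - 1).mulVec (m₃ - m₄) = 0 := by
  obtain ⟨h0, h01, h02⟩ := hm
  obtain ⟨h30, h31, h32⟩ := hm₃
  obtain ⟨h40, h41, h42⟩ := hm₄
  exact ⟨aux_kill σ₀ m m₃ m₄ h0 h01 h30 h31 h40 h41,
    aux_kill σ₁ m m₃ m₄ h0 h02 h30 h32 h40 h42⟩
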